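/- Let n, k ∈ ℕ with 1 ≤ k < n−1 and m : [n] → ℕ with k ∣ m_i for every i ∈ [n]. If the family γ is feasible and attains the minimum total, Σ_{i=1}^{n} Σ_{j≠i} γ_{i,j} = Σ_{i=1}^{n} ( m_i + (n−k−1)·(m_i/k) ), then γ_{i,j} = m_i/k for all i ≠ j ∈ [n]; i.e., under k ∣ m_i and k < n−1 the minimum update bandwidth is achieved only by the uniform assignment γ_{i,j} = m_i/k. -/

import Mathlib

open Finset in
lemma count_mem_powersetCard {α : Type*} [DecidableEq α] (u : Finset α) (k : ℕ) (j : α)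
    (hj : j ∈ u) :
    ((u.powersetCard (k+1)).filter (fun S => j ∈ S)).card = (u.card - 1).choose k := by
  rw [← Finset.card_erase_of_mem hj, ← Finset.card_powersetCard]
  apply Finset.card_bij (fun S _ => S.erase j)
  · intro S hS
    simp only [Finset.mem_filter, Finset.mem_powersetCard] at hS
    simp only [Finset.mem_powersetCard]
    exact ⟨Finset.erase_subset_erase _ hS.1.1,
      by rw [Finset.card_erase_of_mem hS.2, hS.1.2]; rfl⟩
  · intro S1 h1 S2 h2 h
    simp only [Finset.mem_filter] at h1 h2
    rw [← Finset.insert_erase h1.2, ← Finset.insert_erase h2.2, h]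
  · intro T hT
    simp only [Finset.mem_powersetCard] at hT
    have hjT : j ∉ T := fun h => (Finset.mem_erase.1 (hT.1 h)).1 rfl
    refine ⟨insert j T, ?_, ?_⟩
    · simp only [Finset.mem_filter, Finset.mem_powersetCard]
      refine ⟨⟨Finset.insert_subset hj (hT.1.trans (Finset.erase_subset _ _)), ?_⟩,
        Finset.mem_insert_self _ _⟩
      rw [Finset.card_insert_of_notMem hjT, hT.2]
    · rw [Finset.erase_insert hjT]

open Finset in
lemma sum_powersetCard_sum {α : Type*} [DecidableEq α] (u : Finset α) (k : ℕ) (f : α → ℕ) :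
    ∑ S ∈ u.powersetCard (k+1), ∑ j ∈ S, f j
      = (u.card - 1).choose k * ∑ j ∈ u, f j := by
  have h1 : ∀ S ∈ u.powersetCard (k+1), ∑ j ∈ S, f j
      = ∑ j ∈ u, if j ∈ S then f j else 0 := by
    intro S hS
    rw [Finset.sum_ite_mem, Finset.inter_eq_right.mpr (Finset.mem_powersetCard.1 hS).1]
  rw [Finset.sum_congr rfl h1, Finset.sum_comm, Finset.mul_sum]
  refine Finset.sum_congr rfl fun j hj => ?_
  rw [← Finset.sum_filter, Finset.sum_const, count_mem_powersetCard u k j hj, smul_eq_mul]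

open Finset in
lemma row_key {α : Type*} [DecidableEq α] (u : Finset α) (K c : ℕ) (f : α → ℕ)
    (hku : K + 1 < u.card)
    (hfeas : ∀ S ⊆ u, S.card = K + 1 → (K+1) * c ≤ ∑ j ∈ S, f j) :
    u.card * c ≤ ∑ j ∈ u, f j ∧
    (∑ j ∈ u, f j = u.card * c → ∀ j ∈ u, f j = c) := by
  set N := u.card with hN
  have hN1 : 1 ≤ N := by omega
  have hchoosepos : 0 < (N - 1).choose K := Nat.choose_pos (by omega)
  have hid : N * (N - 1).choose K = N.choose (K+1) * (K+1) := by
    have := Nat.add_one_mul_choose_eq (N - 1) K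
    rw [show N - 1 + 1 = N by omega] at this
    exact this
  have hfeas' : ∀ S ∈ u.powersetCard (K+1), (K+1) * c ≤ ∑ j ∈ S, f j := by
    intro S hS
    obtain ⟨h1, h2⟩ := Finset.mem_powersetCard.1 hS
    exact hfeas S h1 h2
  have htot : N.choose (K+1) * ((K+1) * c)
      ≤ (N - 1).choose K * ∑ j ∈ u, f j := by
    rw [← sum_powersetCard_sum]
    calc N.choose (K+1) * ((K+1) * c)
        = ∑ _S ∈ u.powersetCard (K+1), (K+1) * c := by
          rw [Finset.sum_const, Finset.card_powersetCard, ← hN, smul_eq_mul]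
      _ ≤ _ := Finset.sum_le_sum hfeas'
  have hbound : N * c ≤ ∑ j ∈ u, f j := by
    have : (N - 1).choose K * (N * c) ≤ (N - 1).choose K * ∑ j ∈ u, f j := by
      calc (N - 1).choose K * (N * c) = N.choose (K+1) * ((K+1) * c) := by rw [← mul_assoc, mul_comm ((N-1).choose K) N, hid, mul_assoc]
        _ ≤ _ := htot
    exact Nat.le_of_mul_le_mul_left this hchoosepos
  refine ⟨hbound, fun hsum => ?_⟩
  -- equality case: every (K+1)-subset has sum exactly (K+1)*c
  have hSeq : ∀ S ∈ u.powersetCard (K+1), ∑ j ∈ S, f j = (K+1) * c := by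
    have heq : ∑ S ∈ u.powersetCard (K+1), ((K+1) * c)
        = ∑ S ∈ u.powersetCard (K+1), ∑ j ∈ S, f j := by
      rw [sum_powersetCard_sum, hsum, Finset.sum_const, Finset.card_powersetCard, ← hN,
        smul_eq_mul]
      rw [show (N-1).choose K * (N * c) = N * (N-1).choose K * c by ring, hid]; ring
    intro S hS
    exact ((Finset.sum_eq_sum_iff_of_le hfeas').1 heq S hS).symm
  -- all values equal
  have hpair : ∀ j ∈ u, ∀ j' ∈ u, j ≠ j' → f j = f j' := by
    intro j hj j' hj' hne
    obtain ⟨T, hTsub, hTcard⟩ :=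
      Finset.exists_subset_card_eq (s := (u.erase j').erase j) (n := K)
        (by rw [Finset.card_erase_of_mem (Finset.mem_erase.2 ⟨hne, hj⟩),
              Finset.card_erase_of_mem hj']; omega)
    have hjT : j ∉ T := fun h => (Finset.mem_erase.1 (hTsub h)).1 rfl
    have hj'T : j' ∉ T := fun h =>
      (Finset.mem_erase.1 ((Finset.erase_subset _ _) (hTsub h))).1 rfl
    have hTu : T ⊆ u := hTsub.trans ((Finset.erase_subset _ _).trans (Finset.erase_subset _ _))
    have h1 : ∑ l ∈ insert j T, f l = (K+1) * c := by
      apply hSeq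
      rw [Finset.mem_powersetCard]
      exact ⟨Finset.insert_subset hj hTu, by rw [Finset.card_insert_of_notMem hjT, hTcard]⟩
    have h2 : ∑ l ∈ insert j' T, f l = (K+1) * c := by
      apply hSeq
      rw [Finset.mem_powersetCard]
      exact ⟨Finset.insert_subset hj' hTu, by rw [Finset.card_insert_of_notMem hj'T, hTcard]⟩
    rw [Finset.sum_insert hjT] at h1
    rw [Finset.sum_insert hj'T] at h2
    omega
  intro j hj
  have hall : ∑ l ∈ u, f l = N * f j := by
    have hc : ∀ l ∈ u, f l = f j := by
      intro l hl
      by_cases h : l = j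
      · rw [h]
      · exact hpair l hl j hj h
    rw [Finset.sum_congr rfl hc, Finset.sum_const, smul_eq_mul, hN]
  have : N * f j = N * c := by rw [← hall, hsum]
  exact Nat.eq_of_mul_eq_mul_left (by omega) this

theorem stmt4 (n k : ℕ) (hk1 : 1 ≤ k) (hk2 : k < n - 1) (m : Fin n → ℕ)
    (hdvd : ∀ i, k ∣ m i)
    (γ : Fin n → Fin n → ℕ)
    (hfeas : ∀ E : Finset (Fin n), E.card = n - k →
      ∀ i ∈ E, m i ≤ ∑ j ∈ Eᶜ, γ i j)
    (hmin : ∑ i, ∑ j ∈ Finset.univ.erase i, γ i j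
      = ∑ i, (m i + (n - k - 1) * (m i / k))) :
    ∀ i j : Fin n, i ≠ j → γ i j = m i / k := by
  have hn3 : 3 ≤ n := by omega
  set u : Fin n → Finset (Fin n) := fun i => (Finset.univ : Finset (Fin n)).erase i with hu
  have hucard : ∀ i, (u i).card = n - 1 := by
    intro i
    rw [hu, Finset.card_erase_of_mem (Finset.mem_univ i), Finset.card_univ, Fintype.card_fin]
  have hmk : ∀ i, k * (m i / k) = m i := fun i => Nat.mul_div_cancel' (hdvd i)
  obtain ⟨K, rfl⟩ : ∃ K, k = K + 1 := ⟨k - 1, by omega⟩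
  have hsubfeas : ∀ i, ∀ S ⊆ u i, S.card = K + 1 →
      (K + 1) * (m i / (K + 1)) ≤ ∑ j ∈ S, γ i j := by
    intro i S hSu hScard
    have hiS : i ∉ S := fun h => (Finset.mem_erase.1 (hSu h)).1 rfl
    have hEcard : (Sᶜ : Finset (Fin n)).card = n - (K + 1) := by
      rw [Finset.card_compl, hScard, Fintype.card_fin]
    have hiE : i ∈ (Sᶜ : Finset (Fin n)) := Finset.mem_compl.2 hiS
    have := hfeas Sᶜ hEcard i hiE
    rw [compl_compl] at this
    rw [hmk i]
    exact this
  have hrow : ∀ i, (u i).card * (m i / (K + 1)) ≤ ∑ j ∈ u i, γ i j ∧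
      (∑ j ∈ u i, γ i j = (u i).card * (m i / (K + 1)) → ∀ j ∈ u i, γ i j = m i / (K + 1)) := by
    intro i
    exact row_key (u i) K (m i / (K + 1)) (γ i) (by rw [hucard]; omega) (hsubfeas i)
  have hrhs : ∀ i, m i + (n - (K + 1) - 1) * (m i / (K + 1))
      = (u i).card * (m i / (K + 1)) := by
    intro i
    rw [hucard]
    set c := m i / (K + 1) with hc
    rw [← hmk i, ← hc, show n - 1 = (K + 1) + (n - (K + 1) - 1) by omega, add_mul]
    ring
  have hroweq : ∀ i, ∑ j ∈ u i, γ i j = (u i).card * (m i / (K + 1)) := by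
    have hle : ∀ i ∈ (Finset.univ : Finset (Fin n)),
        (u i).card * (m i / (K + 1)) ≤ ∑ j ∈ u i, γ i j := fun i _ => (hrow i).1
    have heq : ∑ i, ((u i).card * (m i / (K + 1))) = ∑ i, ∑ j ∈ u i, γ i j := by
      rw [hmin]
      exact Finset.sum_congr rfl fun i _ => (hrhs i).symm
    intro i
    exact ((Finset.sum_eq_sum_iff_of_le hle).1 heq i (Finset.mem_univ i)).symm
  intro i j hij
  exact (hrow i).2 (hroweq i) j (Finset.mem_erase.2 ⟨hij.symm, Finset.mem_univ j⟩)
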